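/- Let G be a connected semisimple Lie group of real rank 1 and 𝔤 = 𝔨 ⊕ 𝔞 ⊕ 𝔫 an Iwasawa decomposition with 𝔫 = 𝔤_α ⊕ 𝔤_{2α} the restricted root space decomposition. For any nonzero Y = Y_α + Y_{2α} ∈ 𝔫, the sequence of Cartan subspaces (Ad exp(2nY_α + nY_{2α})(𝔞))_{n∈ℕ} converges in the Grassmannian Gr₁(𝔤) to the line ℝY. -/

import Mathlib

open Filter

noncomputable section

/-- Convergence of a sequence of subspaces (given as subsets of the ambient space) to a
limit subspace, in the Kuratowski sense; for subspaces of a fixed finite dimension this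
is exactly convergence in the Grassmannian. -/
def GrLimit {M : Type*} [TopologicalSpace M] (W : ℕ → Set M) (L : Set M) : Prop :=
  (∀ v ∈ L, ∃ u : ℕ → M, (∀ n, u n ∈ W n) ∧ Tendsto u atTop (nhds v)) ∧
  (∀ φ : ℕ → ℕ, StrictMono φ → ∀ u : ℕ → M, (∀ n, u n ∈ W (φ n)) →
    ∀ v : M, Tendsto u atTop (nhds v) → v ∈ L)

/-- The exponential `exp(ad Z)` of the (nilpotent) adjoint of `Z`, computed as the
truncated exponential series up to order `d`. -/
noncomputable def expAd {𝔤 : Type*} [LieRing 𝔤] [LieAlgebra ℝ 𝔤] (d : ℕ) (Z : 𝔤) :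
    𝔤 →ₗ[ℝ] 𝔤 :=
  ∑ k ∈ Finset.range d, ((k.factorial : ℝ))⁻¹ • ((LieAlgebra.ad ℝ 𝔤 Z) ^ k)

/-- Let `𝔤` be the Lie algebra of a connected semisimple Lie group of real rank one,
`𝔞 = ℝH₀` a Cartan subspace, and `𝔫 = 𝔤_α ⊕ 𝔤_{2α}` the restricted root space
decomposition. For every nonzero `Y = Y_α + Y_{2α} ∈ 𝔫`, the sequence of Cartan
subspaces `Ad exp(2nY_α + nY_{2α})(𝔞)` converges in the Grassmannian of lines of `𝔤` to
the line `ℝY`. -/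
theorem stmt12 (𝔤 : Type*) [LieRing 𝔤] [LieAlgebra ℝ 𝔤] [Module.Finite ℝ 𝔤]
    [TopologicalSpace 𝔤] [IsTopologicalAddGroup 𝔤] [ContinuousSMul ℝ 𝔤] [T2Space 𝔤]
    [LieAlgebra.IsSemisimple ℝ 𝔤]
    (H₀ : 𝔤) (hH₀ : H₀ ≠ 0) (c : ℝ) (hc : 0 < c)
    (gα g2α : Submodule ℝ 𝔤)
    (hα : ∀ v ∈ gα, ⁅H₀, v⁆ = c • v)
    (h2α : ∀ v ∈ g2α, ⁅H₀, v⁆ = (2 * c) • v)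
    (hroot1 : ∀ v ∈ gα, ∀ w ∈ gα, ⁅v, w⁆ ∈ g2α)
    (hroot2 : ∀ v ∈ gα, ∀ w ∈ g2α, ⁅v, w⁆ = 0)
    (hroot3 : ∀ v ∈ g2α, ∀ w ∈ g2α, ⁅v, w⁆ = 0)
    (Yα Y2α : 𝔤) (hYα : Yα ∈ gα) (hY2α : Y2α ∈ g2α) (hY : Yα + Y2α ≠ 0)
    (hnil : (LieAlgebra.ad ℝ 𝔤 ((2 : ℝ) • Yα + Y2α)) ^ (Module.finrank ℝ 𝔤) = 0) :
    GrLimit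
      (fun n => (fun v =>
          expAd (Module.finrank ℝ 𝔤 + 1) ((n : ℝ) • ((2 : ℝ) • Yα + Y2α)) v) ''
        {v : 𝔤 | ∃ t : ℝ, v = t • H₀})
      {v : 𝔤 | ∃ t : ℝ, v = t • (Yα + Y2α)} := by
  classical
  set d := Module.finrank ℝ 𝔤 with hd
  have : Nontrivial 𝔤 := nontrivial_of_ne H₀ 0 hH₀
  have hd1 : 1 ≤ d := Module.finrank_pos
  set Y := Yα + Y2α with hYdef
  set Z := (2 : ℝ) • Yα + Y2α with hZdef
  have hYne : Y ≠ 0 := hY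
  -- basic bracket computations
  have hb1 : ⁅Yα, Y2α⁆ = 0 := hroot2 Yα hYα Y2α hY2α
  have hb2 : ⁅Y2α, Yα⁆ = 0 := by rw [← lie_skew, hb1, neg_zero]
  have hZY : ⁅Z, Y⁆ = 0 := by
    simp [hZdef, hYdef, lie_add, add_lie, smul_lie, hb1, hb2]
  have hZH : ⁅Z, H₀⁆ = (-(2 * c)) • Y := by
    have h1 : ⁅H₀, Yα⁆ = c • Yα := hα Yα hYα
    have h2 : ⁅H₀, Y2α⁆ = (2 * c) • Y2α := h2α Y2α hY2α
    have h3 : ⁅H₀, Z⁆ = (2 * c) • Y := by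
      rw [hZdef, lie_add, lie_smul, h1, h2, hYdef]
      module
    rw [← lie_skew, h3, neg_smul]
  -- the key computation of the exponential on the line ℝH₀
  have key : ∀ (n : ℕ) (t : ℝ),
      expAd (d + 1) ((n : ℝ) • Z) (t • H₀) = t • H₀ + (-(2 * c * n * t)) • Y := by
    intro n t
    set A := LieAlgebra.ad ℝ 𝔤 ((n : ℝ) • Z) with hA
    have hAH : A (t • H₀) = (-(2 * c * n * t)) • Y := by
      rw [hA, LieAlgebra.ad_apply, smul_lie, lie_smul, hZH]
      module
    have hAY : A Y = 0 := by
      rw [hA, LieAlgebra.ad_apply, smul_lie, hZY, smul_zero]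
    have hpow : ∀ k, 2 ≤ k → (A ^ k) (t • H₀) = 0 := by
      intro k hk
      obtain ⟨j, rfl⟩ : ∃ j, k = j + 2 := ⟨k - 2, by omega⟩
      rw [pow_add, Module.End.mul_apply, pow_two, Module.End.mul_apply, hAH,
        map_smul, hAY, smul_zero, map_zero]
    have hsub : Finset.range 2 ⊆ Finset.range (d + 1) := Finset.range_subset_range.2 (by omega)
    rw [expAd, LinearMap.sum_apply, ← Finset.sum_subset hsub]
    · rw [Finset.sum_range_succ, Finset.sum_range_one]
      simp only [LinearMap.smul_apply, pow_zero, pow_one, Nat.factorial_zero,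
        Nat.factorial_one, Nat.cast_one, inv_one, Module.End.one_apply, one_smul, hAH]
      rw [← hA, hAH]
    · intro k _ hk2
      have h2k : 2 ≤ k := by
        simp only [Finset.mem_range] at hk2; omega
      rw [LinearMap.smul_apply, hpow k h2k, smul_zero]
  -- linear independence of H₀ and Y
  have hind : LinearIndependent ℝ ![H₀, Y] := by
    rw [LinearIndependent.pair_iff]
    intro s r hsr
    have hbr : ⁅H₀, Y⁆ = c • Yα + (2 * c) • Y2α := by
      rw [hYdef, lie_add, hα Yα hYα, h2α Y2α hY2α]
    have e1 : (r * c) • Yα + (r * (2 * c)) • Y2α = 0 := by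
      have h := congrArg (fun x => ⁅H₀, x⁆) hsr
      simp only [lie_add, lie_smul, lie_self, smul_zero, zero_add, lie_zero, hbr,
        smul_add, smul_smul] at h
      exact h
    have e2 : (r * c * c) • Yα + (r * (2 * c) * (2 * c)) • Y2α = 0 := by
      have h := congrArg (fun x => ⁅H₀, x⁆) e1
      simp only [lie_add, lie_smul, hα Yα hYα, h2α Y2α hY2α, lie_zero, smul_smul] at h
      exact h
    have e3 : (2 * (r * c * c)) • Y2α = 0 := by
      have := congrArg (fun x => c • x - x) (congrArg₂ (fun a b => (a, b)) e1 e2)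
      have h4 : c • ((r * c) • Yα + (r * (2 * c)) • Y2α)
          - ((r * c * c) • Yα + (r * (2 * c) * (2 * c)) • Y2α)
          = (-(2 * (r * c * c))) • Y2α := by module
      rw [e1, e2, smul_zero, sub_zero] at h4
      rw [← neg_neg ((2 * (r * c * c)) • Y2α), ← neg_smul, ← h4, neg_zero]
    have hr2 : r • Y2α = 0 := by
      have hne : (2 * (r * c * c)) • Y2α = (2 * c * c) • (r • Y2α) := by module
      rw [hne] at e3
      rcases smul_eq_zero.mp e3 with h | h
      · exact absurd h (by positivity)
      · exact h
    have hr1 : r • Yα = 0 := by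
      have : (r * c) • Yα = -((r * (2 * c)) • Y2α) := by
        rw [eq_neg_iff_add_eq_zero]; exact e1
      have h5 : (r * (2 * c)) • Y2α = (2 * c) • (r • Y2α) := by module
      rw [h5, hr2, smul_zero, neg_zero] at this
      have : c • (r • Yα) = 0 := by rw [smul_smul, mul_comm]; exact this
      rcases smul_eq_zero.mp this with h | h
      · exact absurd h hc.ne'
      · exact h
    have hr : r = 0 := by
      have : r • Y = 0 := by rw [hYdef, smul_add, hr1, hr2, add_zero]
      rcases smul_eq_zero.mp this with h | h
      · exact h
      · exact absurd h hYne
    refine ⟨?_, hr⟩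
    rw [hr, zero_smul, add_zero] at hsr
    rcases smul_eq_zero.mp hsr with h | h
    · exact h
    · exact absurd h hH₀
  -- coordinate functionals
  set p := Submodule.span ℝ (Set.range ![H₀, Y]) with hp
  have hH₀p : H₀ ∈ p := Submodule.subset_span ⟨0, rfl⟩
  have hYp : Y ∈ p := Submodule.subset_span ⟨1, rfl⟩
  obtain ⟨q, hq⟩ := Submodule.exists_isCompl p
  set proj := p.linearProjOfIsCompl q hq with hproj
  obtain ⟨f, g, hfH, hfY, hgH, hgY⟩ :
      ∃ f g : 𝔤 →ₗ[ℝ] ℝ, f H₀ = 1 ∧ f Y = 0 ∧ g H₀ = 0 ∧ g Y = 1 := by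
    have hreprH : hind.repr ⟨H₀, hH₀p⟩ = Finsupp.single 0 1 :=
      hind.repr_eq_single 0 ⟨H₀, hH₀p⟩ rfl
    have hreprY : hind.repr ⟨Y, hYp⟩ = Finsupp.single 1 1 :=
      hind.repr_eq_single 1 ⟨Y, hYp⟩ rfl
    have hprojH : proj H₀ = ⟨H₀, hH₀p⟩ := Submodule.linearProjOfIsCompl_apply_left hq ⟨H₀, hH₀p⟩
    have hprojY : proj Y = ⟨Y, hYp⟩ := Submodule.linearProjOfIsCompl_apply_left hq ⟨Y, hYp⟩
    refine ⟨(Finsupp.lapply (0 : Fin 2)).comp (hind.repr.comp proj),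
      (Finsupp.lapply (1 : Fin 2)).comp (hind.repr.comp proj), ?_, ?_, ?_, ?_⟩ <;>
    simp [LinearMap.comp_apply, hprojH, hprojY, hreprH, hreprY]
  constructor
  · -- approximation of every point of the limit line
    rintro v ⟨t, rfl⟩
    refine ⟨fun n => expAd (d + 1) ((n : ℝ) • Z) ((-t / (2 * c) / (n : ℝ)) • H₀),
      fun n => ⟨_, ⟨_, rfl⟩, rfl⟩, ?_⟩
    have hpt : ∀ n : ℕ, 1 ≤ n →
        expAd (d + 1) ((n : ℝ) • Z) ((-t / (2 * c) / (n : ℝ)) • H₀)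
          = (-t / (2 * c) / (n : ℝ)) • H₀ + t • Y := by
      intro n hn
      rw [key]
      congr 2
      have hn0 : (n : ℝ) ≠ 0 := Nat.cast_ne_zero.2 (by omega)
      field_simp
    have h1 : Tendsto (fun n : ℕ => (-t / (2 * c) / (n : ℝ)) • H₀ + t • Y) atTop
        (nhds (t • Y)) := by
      have h0 := (tendsto_const_div_atTop_nhds_zero_nat (-t / (2 * c))).smul_const H₀
      rw [zero_smul] at h0
      simpa using h0.add_const (t • Y)
    refine h1.congr' ?_
    filter_upwards [eventually_ge_atTop 1] with n hn
    exact (hpt n hn).symm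
  · -- every limit of points of the subspaces lies on the limit line
    intro φ hφ u hu v hv
    have hu' : ∀ n, ∃ s : ℝ, u n = s • H₀ + (-(2 * c * (φ n) * s)) • Y := by
      intro n
      obtain ⟨x, ⟨s, rfl⟩, hx⟩ := hu n
      refine ⟨s, ?_⟩
      rw [← hx]
      exact key (φ n) s
    choose t ht using hu'
    have hcf : Continuous f := f.continuous_of_finiteDimensional
    have hcg : Continuous g := g.continuous_of_finiteDimensional
    have hft : Tendsto t atTop (nhds (f v)) := by
      have h0 : Tendsto (fun n => f (u n)) atTop (nhds (f v)) := (hcf.tendsto v).comp hv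
      refine h0.congr fun n => ?_
      rw [ht n, map_add, map_smul, map_smul, hfH, hfY, smul_eq_mul, mul_one,
        smul_eq_mul, mul_zero, add_zero]
    have hst : Tendsto (fun n => -(2 * c * (φ n) * t n)) atTop (nhds (g v)) := by
      have h0 : Tendsto (fun n => g (u n)) atTop (nhds (g v)) := (hcg.tendsto v).comp hv
      refine h0.congr fun n => ?_
      rw [ht n, map_add, map_smul, map_smul, hgH, hgY, smul_eq_mul, mul_zero,
        smul_eq_mul, mul_one, zero_add]
    have hfv : f v = 0 := by
      by_contra hne
      have habs0 : Tendsto (fun n => |t n|) atTop (nhds |f v|) := hft.abs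
      have hhalf : ∀ᶠ n in atTop, |f v| / 2 < |t n| :=
        habs0.eventually (eventually_gt_nhds (half_lt_self (abs_pos.2 hne)))
      have hlin : Tendsto (fun n : ℕ => (c * |f v|) * n) atTop atTop :=
        (tendsto_natCast_atTop_atTop (R := ℝ)).const_mul_atTop
          (by positivity)
      have habs : Tendsto (fun n => |(-(2 * c * (φ n) * t n))|) atTop atTop := by
        refine tendsto_atTop_mono' atTop ?_ hlin
        filter_upwards [hhalf] with n hn
        have hφn : (n : ℝ) ≤ (φ n : ℝ) := Nat.cast_le.2 hφ.le_apply
        have hn0 : (0 : ℝ) ≤ (n : ℝ) := Nat.cast_nonneg n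
        have h1 : |(-(2 * c * (φ n) * t n))| = 2 * c * (φ n) * |t n| := by
          rw [abs_neg, abs_mul, abs_of_nonneg (by positivity : (0:ℝ) ≤ 2 * c * (φ n))]
        rw [h1]
        calc (c * |f v|) * n = 2 * c * n * (|f v| / 2) := by ring
          _ ≤ 2 * c * (φ n) * |t n| := by
              apply mul_le_mul
              · nlinarith
              · exact hn.le
              · positivity
              · positivity
      exact (hst.abs.not_tendsto (disjoint_nhds_atTop _)) habs
    have hlim : Tendsto (fun n => (-(2 * c * (φ n) * t n)) • Y) atTop (nhds v) := by
      have h1 : Tendsto (fun n => t n • H₀) atTop (nhds 0) := by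
        have := hft.smul_const H₀
        rw [hfv, zero_smul] at this
        exact this
      have heq : (fun n => (-(2 * c * (φ n) * t n)) • Y) = fun n => u n - t n • H₀ := by
        funext n; rw [ht n]; abel
      rw [heq]
      simpa using hv.sub h1
    have hclosed : IsClosed ((Submodule.span ℝ {Y} : Submodule ℝ 𝔤) : Set 𝔤) :=
      Submodule.closed_of_finiteDimensional _
    have hmem : v ∈ Submodule.span ℝ {Y} :=
      hclosed.mem_of_tendsto hlim (Eventually.of_forall fun n =>
        Submodule.smul_mem _ _ (Submodule.mem_span_singleton_self Y))
    obtain ⟨a, ha⟩ := Submodule.mem_span_singleton.mp hmem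
    exact ⟨a, ha.symm⟩
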